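/- Over a commutative ℚ-algebra K, the Hoffman exponential Φ := E_{e^t−1} (the evaluation operator at the series e^t − 1, i.e., Φ(u₁⋯u_n) = Σ_{I ∈ C(n)} (1/I!)(u₁⋯u_n)_I with I! = I₁!⋯I_{len(I)}!) is a linear automorphism of the free K-module on words over a commutative monoid alphabet, with inverse Φ^{-1} = E_{log(1+t)} given by Φ^{-1}(u₁⋯u_n) = Σ_{I ∈ C(n)} ((−1)^{n−len(I)}/(I₁⋯I_{len(I)})) (u₁⋯u_n)_I. -/

import Mathlib

/-- The two-parameter-paper's (one-axis) Hoffman exponential `Φ = E_{e^t−1}`: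
`Φ(u₁⋯u_n) = Σ_{I ∈ C(n)} (1/I!) (u₁⋯u_n)_I`, where `(u₁⋯u_n)_I` merges consecutive
blocks of letters of sizes `I₁,…,I_{len I}` using the commutative monoid operation. -/
noncomputable def hoffmanExp (K M : Type*) [CommRing K] [Algebra ℚ K] [CommMonoid M] :
    ((List M) →₀ K) →ₗ[K] ((List M) →₀ K) :=
  (Finsupp.lift ((List M) →₀ K) K (List M)) fun w =>
    ∑ I : Composition w.length,
      (algebraMap ℚ K ((∏ s : Fin I.length, (Nat.factorial (I.blocksFun s) : ℚ))⁻¹)) •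
        Finsupp.single ((w.splitWrtComposition I).map List.prod) (1 : K)

/-- The Hoffman logarithm `E_{log(1+t)}`:
`u₁⋯u_n ↦ Σ_{I ∈ C(n)} ((−1)^{n−len(I)}/(I₁⋯I_{len I})) (u₁⋯u_n)_I`. -/
noncomputable def hoffmanLog (K M : Type*) [CommRing K] [Algebra ℚ K] [CommMonoid M] :
    ((List M) →₀ K) →ₗ[K] ((List M) →₀ K) :=
  (Finsupp.lift ((List M) →₀ K) K (List M)) fun w =>
    ∑ I : Composition w.length,
      (algebraMap ℚ K
          ((-1 : ℚ) ^ (w.length - I.length) *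
            (∏ s : Fin I.length, (I.blocksFun s : ℚ))⁻¹)) •
        Finsupp.single ((w.splitWrtComposition I).map List.prod) (1 : K)

open List Finset

namespace HoffmanAux

/-! ### List-level lemmas about `splitWrtComposition` -/

theorem split_aux_eq {α : Type*} (L : List (List α)) (ns : List ℕ)
    (h : L.map length = ns) : splitWrtCompositionAux L.flatten ns = L := by
  subst h
  induction L with
  | nil => rfl
  | cons l L ih =>
    simp only [flatten_cons, List.map_cons, splitWrtCompositionAux_cons]
    rw [take_left, drop_left, ih]

theorem map_split_aux {α β : Type*} (f : α → β) :
    ∀ (ns : List ℕ) (l : List α),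
      splitWrtCompositionAux (l.map f) ns = (splitWrtCompositionAux l ns).map (List.map f) := by
  intro ns
  induction ns with
  | nil => intro l; rfl
  | cons n ns ih =>
    intro l
    simp only [splitWrtCompositionAux_cons, List.map_cons, map_take]
    rw [← List.map_drop, ih]

theorem flatten_map_flatten {α : Type*} (L : List (List (List α))) :
    (L.map List.flatten).flatten = L.flatten.flatten := by
  induction L with
  | nil => rfl
  | cons a L ih => simp_all

/-- The merged word: split `w` according to `I` and take products of blocks. -/
def merge {M : Type*} [CommMonoid M] (w : List M) {n : ℕ} (I : Composition n) : List M :=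
  (w.splitWrtComposition I).map List.prod

@[simp] theorem length_merge {M : Type*} [CommMonoid M] (w : List M) {n : ℕ}
    (I : Composition n) : (merge w I).length = I.length := by
  simp [merge]

theorem merge_merge {M : Type*} [CommMonoid M] (w : List M) (I : Composition w.length)
    (J : Composition I.length) :
    merge (merge w I) J = merge w (I.gather J) := by
  set S := w.splitWrtComposition I with hS
  have h1 : S.map length = I.blocks := map_length_splitWrtComposition w I
  have h2 : S.flatten = w := flatten_splitWrtComposition w I
  have hm : ((S.splitWrtComposition J).map List.flatten).map length = (I.gather J).blocks := by
    show _ = (I.blocks.splitWrtComposition J).map List.sum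
    rw [← h1]
    show _ = ((S.map length).splitWrtCompositionAux J.blocks).map List.sum
    rw [map_split_aux]
    show ((S.splitWrtComposition J).map List.flatten).map length
      = ((S.splitWrtComposition J).map (List.map length)).map List.sum
    simp only [List.map_map]
    simp [Function.comp_def, length_flatten]
  have hj : ((S.splitWrtComposition J).map List.flatten).flatten = w := by
    have h3 : (S.splitWrtComposition J).flatten = S := by
      apply flatten_splitWrtCompositionAux
      rw [J.blocks_sum]
      exact (length_splitWrtComposition w I).symm
    rw [flatten_map_flatten]
    show (S.splitWrtComposition J).flatten.flatten = w
    rw [h3, h2]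
  have key : w.splitWrtComposition (I.gather J) = (S.splitWrtComposition J).map List.flatten := by
    have := split_aux_eq ((S.splitWrtComposition J).map List.flatten) (I.gather J).blocks hm
    rw [hj] at this
    exact this
  show ((S.map List.prod).splitWrtComposition J).map List.prod = _
  show ((S.map List.prod).splitWrtCompositionAux J.blocks).map List.prod = _
  rw [map_split_aux, merge, key]
  show (List.map (List.map List.prod) (S.splitWrtComposition J)).map List.prod
    = ((S.splitWrtComposition J).map List.flatten).map List.prod
  simp only [List.map_map]
  simp [Function.comp_def, prod_flatten]

theorem split_replicate_one {M : Type*} :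
    ∀ (w : List M), splitWrtCompositionAux w (replicate w.length 1) = w.map (fun a => [a]) := by
  intro w
  induction w with
  | nil => rfl
  | cons a l ih => simp [replicate_succ, splitWrtCompositionAux_cons, ih]

theorem merge_ones {M : Type*} [CommMonoid M] (w : List M) :
    merge w (Composition.ones w.length) = w := by
  show ((splitWrtCompositionAux w (Composition.ones w.length).blocks).map List.prod) = w
  rw [Composition.ones_blocks, split_replicate_one]
  simp only [List.map_map]
  simp [Function.comp_def]


/-! ### The evaluation maps -/

theorem blocks_map_prod {n : ℕ} (I : Composition n) (f : ℕ → ℚ) :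
    (I.blocks.map f).prod = ∏ j : Fin I.length, f (I.blocksFun j) := by
  conv_lhs => rw [← Composition.ofFn_blocksFun I]
  rw [List.map_ofFn, List.prod_ofFn]
  rfl

theorem sum_comp_cast {α : Type*} [AddCommMonoid α] {m n : ℕ} (h : m = n) (F : List ℕ → α) :
    ∑ J : Composition m, F J.blocks = ∑ J : Composition n, F J.blocks := by subst h; rfl

section Ev

variable (K M : Type*) [CommRing K] [Algebra ℚ K] [CommMonoid M]

noncomputable def Ev (c : ℕ → ℚ) : ((List M) →₀ K) →ₗ[K] ((List M) →₀ K) :=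
  (Finsupp.lift ((List M) →₀ K) K (List M)) fun w =>
    ∑ I : Composition w.length,
      (algebraMap ℚ K ((I.blocks.map c).prod)) • Finsupp.single (merge w I) (1 : K)

variable {K M}

theorem Ev_single (c : ℕ → ℚ) (w : List M) :
    Ev K M c (Finsupp.single w (1 : K)) = ∑ I : Composition w.length,
      (algebraMap ℚ K ((I.blocks.map c).prod)) • Finsupp.single (merge w I) (1 : K) := by
  simp [Ev, Finsupp.lift_apply, Finsupp.sum_single_index]

theorem Ev_congr {c c' : ℕ → ℚ} (h : ∀ m, 0 < m → c m = c' m) :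
    Ev K M c = Ev K M c' := by
  unfold Ev
  congr 1
  funext w
  refine Finset.sum_congr rfl fun I _ => ?_
  congr 3
  exact List.map_congr_left fun b hb => h b (I.blocks_pos hb)

theorem Ev_delta :
    Ev K M (fun m => if m = 1 then (1 : ℚ) else 0) = LinearMap.id := by
  refine Finsupp.lhom_ext' fun w => LinearMap.ext_ring ?_
  simp only [LinearMap.comp_apply, Finsupp.lsingle_apply, LinearMap.id_apply]
  rw [Ev_single]
  rw [Finset.sum_eq_single (Composition.ones w.length)]
  · rw [Composition.ones_blocks, List.map_replicate, if_pos rfl, List.prod_replicate,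
      one_pow, map_one, one_smul, merge_ones]
  · intro I _ hI
    obtain ⟨b, hb, hb1⟩ := Composition.ne_ones_iff.mp hI
    have : ((I.blocks.map fun m => if m = 1 then (1 : ℚ) else 0)).prod = 0 := by
      apply List.prod_eq_zero
      exact List.mem_map.2 ⟨b, hb, if_neg (by omega)⟩
    rw [this, map_zero, zero_smul]
  · intro h; exact absurd (Finset.mem_univ _) h

theorem Ev_comp (c₁ c₂ : ℕ → ℚ) :
    (Ev K M c₂) ∘ₗ (Ev K M c₁)
      = Ev K M (fun m => ∑ d : Composition m, c₂ d.length * (d.blocks.map c₁).prod) := by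
  refine Finsupp.lhom_ext' fun w => LinearMap.ext_ring ?_
  simp only [LinearMap.comp_apply, Finsupp.lsingle_apply]
  rw [Ev_single, map_sum]
  simp only [LinearMap.map_smul, Ev_single]
  -- reindex the inner sums along `(merge w I).length = I.length`
  have step : ∀ I : Composition w.length,
      (∑ J : Composition (merge w I).length,
        (algebraMap ℚ K ((J.blocks.map c₂).prod)) • Finsupp.single (merge (merge w I) J) (1 : K))
      = ∑ J : Composition I.length,
        (algebraMap ℚ K ((J.blocks.map c₂).prod)) • Finsupp.single (merge (merge w I) J) (1 : K) := by
    intro I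
    exact sum_comp_cast (length_merge w I)
      (fun bs => (algebraMap ℚ K ((bs.map c₂).prod)) •
        Finsupp.single ((splitWrtCompositionAux (merge w I) bs).map List.prod) (1 : K))
  simp only [step, merge_merge, Finset.smul_sum, smul_smul, ← map_mul]
  rw [Finset.sum_sigma', Finset.univ_sigma_univ]
  rw [← Equiv.sum_comp (Composition.sigmaEquivSigmaPi w.length).symm]
  rw [← Finset.univ_sigma_univ, Finset.sum_sigma]
  -- now compute the right-hand side
  refine Finset.sum_congr rfl fun Kc _ => ?_
  have e3 : ∀ D : ∀ i : Fin Kc.length, Composition (Kc.blocksFun i),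
      ((Composition.sigmaEquivSigmaPi w.length).symm ⟨Kc, D⟩).fst.gather
        ((Composition.sigmaEquivSigmaPi w.length).symm ⟨Kc, D⟩).snd = Kc := fun D =>
    congrArg Sigma.fst ((Composition.sigmaEquivSigmaPi w.length).apply_symm_apply ⟨Kc, D⟩)
  have e1 : ∀ D : ∀ i : Fin Kc.length, Composition (Kc.blocksFun i),
      ((Composition.sigmaEquivSigmaPi w.length).symm ⟨Kc, D⟩).fst.blocks
        = (List.ofFn fun j => (D j).blocks).flatten := fun D => rfl
  have e2 : ∀ D : ∀ i : Fin Kc.length, Composition (Kc.blocksFun i),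
      ((Composition.sigmaEquivSigmaPi w.length).symm ⟨Kc, D⟩).snd.blocks
        = List.ofFn fun j => (D j).length := fun D => rfl
  rw [blocks_map_prod]
  rw [Fintype.prod_sum, map_sum, Finset.sum_smul]
  refine Finset.sum_congr rfl fun D _ => ?_
  rw [e1 D, e2 D, e3 D]
  congr 1
  rw [Finset.prod_mul_distrib, mul_comm]
  rw [List.map_ofFn, List.prod_ofFn]
  simp [Function.comp_def, List.prod_ofFn, map_prod]

end Ev

/-! ### Scalar identities -/

def cL : ℕ → ℚ := fun b => (-1) ^ (b - 1) * (b : ℚ)⁻¹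

instance uniqueComp0 : Unique (Composition 0) where
  default := Composition.ones 0
  uniq := by
    intro d
    have hb : d.blocks = [] := by
      rcases hb : d.blocks with _ | ⟨a, t⟩
      · rfl
      · exfalso
        have hs := d.blocks_sum
        have ha : 0 < a := d.blocks_pos (by rw [hb]; exact List.mem_cons_self)
        rw [hb] at hs
        simp only [List.sum_cons] at hs
        omega
    ext1
    rw [hb]
    rfl

def rotC {m : ℕ} (d : Composition m) (k : ℕ) : Composition m where
  blocks := d.blocks.rotate k
  blocks_pos := fun hi => d.blocks_pos ((List.mem_rotate).1 hi)
  blocks_sum := by rw [(List.rotate_perm d.blocks k).sum_eq, d.blocks_sum]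

theorem rotC_length {m : ℕ} (d : Composition m) (k : ℕ) :
    (rotC d k).length = d.length := by
  show (d.blocks.rotate k).length = d.blocks.length
  exact List.length_rotate d.blocks k

theorem sigma_ext {m : ℕ} {p q : Σ d : Composition m, Fin d.length}
    (h1 : p.1 = q.1) (h2 : (p.2 : ℕ) = (q.2 : ℕ)) : p = q := by
  obtain ⟨a, i⟩ := p
  obtain ⟨b, j⟩ := q
  dsimp at h1
  subst h1
  simp_all [Fin.ext_iff]

theorem headI_rotate {l : List ℕ} {i : ℕ} (h : i < l.length) :
    (l.rotate i).headI = l.get ⟨i, h⟩ := by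
  rw [List.rotate_eq_drop_append_take h.le, List.drop_eq_getElem_cons h, List.cons_append]
  rfl

def rotEquiv (m : ℕ) : (Σ d : Composition m, Fin d.length) ≃ (Σ d : Composition m, Fin d.length) where
  toFun p := ⟨rotC p.1 p.2, Fin.cast (rotC_length p.1 p.2).symm p.2⟩
  invFun p := ⟨rotC p.1 (p.1.length - p.2), Fin.cast (rotC_length _ _).symm p.2⟩
  left_inv := by
    rintro ⟨d, i⟩
    refine sigma_ext ?_ rfl
    show rotC (rotC d i) ((rotC d i).length - i) = d
    ext1
    show ((d.blocks.rotate i).rotate ((rotC d i).length - i)) = d.blocks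
    rw [rotC_length]
    have hi : (i : ℕ) ≤ d.blocks.length := by
      rw [Composition.blocks_length]; exact i.isLt.le
    rw [List.rotate_rotate]
    show d.blocks.rotate (i + (d.blocks.length - i)) = d.blocks
    rw [Nat.add_sub_cancel' hi, List.rotate_length]
  right_inv := by
    rintro ⟨d, i⟩
    refine sigma_ext ?_ rfl
    show rotC (rotC d (d.length - i)) _ = d
    ext1
    show ((d.blocks.rotate (d.length - i)).rotate _) = d.blocks
    rw [List.rotate_rotate]
    have hi : (i : ℕ) ≤ d.blocks.length := by
      rw [Composition.blocks_length]; exact i.isLt.le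
    show d.blocks.rotate (d.length - i + i) = d.blocks
    have : d.length - (i : ℕ) + (i : ℕ) = d.blocks.length := by
      rw [Composition.blocks_length]
      have := i.isLt
      omega
    rw [this, List.rotate_length]

theorem sum_rot (m : ℕ) (G wt : ℕ → ℚ) :
    ∑ d : Composition m, ((d.length : ℚ) * G d.length * (d.blocks.map wt).prod * (d.blocks.headI : ℚ))
      = (m : ℚ) * ∑ d : Composition m, G d.length * (d.blocks.map wt).prod := by
  have pack : ∀ (f : (d : Composition m) → Fin d.length → ℚ),
      (∑ d : Composition m, ∑ i : Fin d.length, f d i)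
        = ∑ p : Σ d : Composition m, Fin d.length, f p.1 p.2 := by
    intro f
    rw [← Finset.univ_sigma_univ, Finset.sum_sigma]
  have rhs : (m : ℚ) * ∑ d : Composition m, G d.length * (d.blocks.map wt).prod
      = ∑ d : Composition m, ∑ i : Fin d.length,
          G d.length * (d.blocks.map wt).prod * (d.blocksFun i : ℚ) := by
    rw [Finset.mul_sum]
    refine Finset.sum_congr rfl fun d _ => ?_
    have hm : ((m : ℕ) : ℚ) = ∑ i : Fin d.length, (d.blocksFun i : ℚ) := by
      exact_mod_cast d.sum_blocksFun.symm
    rw [mul_comm, hm, Finset.mul_sum]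
  have lhs : ∑ d : Composition m,
        ((d.length : ℚ) * G d.length * (d.blocks.map wt).prod * (d.blocks.headI : ℚ))
      = ∑ d : Composition m, ∑ i : Fin d.length,
          G d.length * (d.blocks.map wt).prod * (d.blocks.headI : ℚ) := by
    refine Finset.sum_congr rfl fun d _ => ?_
    rw [Finset.sum_const, Finset.card_univ, Fintype.card_fin, nsmul_eq_mul]
    ring
  rw [lhs, rhs, pack, pack]
  rw [← Equiv.sum_comp (rotEquiv m)
    (fun p : Σ d : Composition m, Fin d.length =>
      G p.1.length * (p.1.blocks.map wt).prod * (p.1.blocks.headI : ℚ))]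
  refine Finset.sum_congr rfl fun p _ => ?_
  obtain ⟨d, i⟩ := p
  show G (rotC d i).length * ((rotC d i).blocks.map wt).prod * ((rotC d i).blocks.headI : ℚ) = _
  rw [rotC_length]
  have hP : ((rotC d i).blocks.map wt).prod = (d.blocks.map wt).prod :=
    ((List.rotate_perm d.blocks i).map wt).prod_eq
  have hi' : (i : ℕ) < d.blocks.length := by
    rw [Composition.blocks_length]; exact i.isLt
  have hH : (rotC d i).blocks.headI = d.blocksFun i := by
    show (d.blocks.rotate i).headI = _
    rw [headI_rotate hi']
    rfl
  rw [hP, hH]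

section FirstBlock

theorem blocks_cons {m : ℕ} (d : Composition (m+1)) :
    d.blocks.headI :: d.blocks.tail = d.blocks := by
  rcases hb : d.blocks with _ | ⟨a, t⟩
  · exfalso
    have := d.blocks_sum
    rw [hb] at this
    simp at this
  · rfl

theorem headI_pos {m : ℕ} (d : Composition (m+1)) : 0 < d.blocks.headI :=
  d.blocks_pos (by rw [← blocks_cons d]; exact List.mem_cons_self)

theorem headI_tail_sum {m : ℕ} (d : Composition (m+1)) :
    d.blocks.headI + d.blocks.tail.sum = m + 1 := by
  rw [← List.sum_cons, blocks_cons d, d.blocks_sum]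

def tailC {m : ℕ} (d : Composition (m+1)) : Composition (m - (d.blocks.headI - 1)) where
  blocks := d.blocks.tail
  blocks_pos := fun hi => d.blocks_pos (List.mem_of_mem_tail hi)
  blocks_sum := by
    show d.blocks.tail.sum = m - (d.blocks.headI - 1)
    have h1 := headI_pos d
    have h2 := headI_tail_sum d
    omega

def consC {m : ℕ} (j : ℕ) (hj : j < m + 1) (r : Composition (m - j)) : Composition (m+1) where
  blocks := (j+1) :: r.blocks
  blocks_pos := by
    intro i hi
    rcases List.mem_cons.mp hi with h | h
    · omega
    · exact r.blocks_pos h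
  blocks_sum := by
    rw [List.sum_cons, r.blocks_sum]
    omega

theorem comp_first_block (m : ℕ) (F : List ℕ → ℚ) :
    ∑ d : Composition (m+1), F d.blocks
      = ∑ j ∈ Finset.range (m+1), ∑ r : Composition (m - j), F ((j+1) :: r.blocks) := by
  rw [Finset.sum_sigma']
  refine Finset.sum_bij' (fun d _ => ⟨d.blocks.headI - 1, tailC d⟩)
    (fun p hp => consC p.1 (Finset.mem_range.1 (Finset.mem_sigma.1 hp).1) p.2) ?_ ?_ ?_ ?_ ?_
  · intro d _
    refine Finset.mem_sigma.2 ⟨Finset.mem_range.2 ?_, Finset.mem_univ _⟩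
    show d.blocks.headI - 1 < m + 1
    have h1 := headI_pos d
    have h2 := headI_tail_sum d
    omega
  · intro p hp
    exact Finset.mem_univ _
  · intro d hd
    ext1
    show ((d.blocks.headI - 1) + 1) :: d.blocks.tail = d.blocks
    rw [Nat.sub_add_cancel (headI_pos d), blocks_cons]
  · intro p hp
    rfl
  · intro d hd
    show F d.blocks = F (((d.blocks.headI - 1) + 1) :: d.blocks.tail)
    rw [Nat.sub_add_cancel (headI_pos d), blocks_cons]

end FirstBlock

noncomputable def B : ℕ → ℚ := fun m =>
  ∑ d : Composition m, ((Nat.factorial d.length : ℚ))⁻¹ * (d.blocks.map cL).prod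

theorem B_zero : B 0 = 1 := by
  rw [B, Fintype.sum_unique]
  show ((Nat.factorial (Composition.ones 0).length : ℚ))⁻¹ *
    (((Composition.ones 0).blocks.map cL).prod) = 1
  rw [Composition.ones_length, Composition.ones_blocks]
  norm_num


theorem B_rec (m : ℕ) :
    ((m + 1 : ℕ) : ℚ) * B (m + 1) = ∑ j ∈ Finset.range (m + 1), (-1) ^ j * B (m - j) := by
  have h1 := sum_rot (m + 1) (fun k => ((Nat.factorial k : ℚ))⁻¹) cL
  show ((m + 1 : ℕ) : ℚ) * ∑ d : Composition (m + 1),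
      ((Nat.factorial d.length : ℚ))⁻¹ * (d.blocks.map cL).prod = _
  rw [← h1]
  have h2 : (∑ d : Composition (m + 1),
        ((d.length : ℚ) * ((Nat.factorial d.length : ℚ))⁻¹ * (d.blocks.map cL).prod
          * (d.blocks.headI : ℚ)))
      = ∑ j ∈ Finset.range (m + 1), ∑ r : Composition (m - j),
          ((((j+1) :: r.blocks).length : ℚ)
            * ((Nat.factorial ((j+1) :: r.blocks).length : ℚ))⁻¹
            * ((((j+1) :: r.blocks)).map cL).prod * ((((j+1) :: r.blocks)).headI : ℚ)) :=
    comp_first_block m (fun bs => (bs.length : ℚ) * ((Nat.factorial bs.length : ℚ))⁻¹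
      * ((bs.map cL).prod) * (bs.headI : ℚ))
  rw [h2]
  refine Finset.sum_congr rfl fun j hj => ?_
  rw [show B (m - j) = ∑ r : Composition (m - j),
      ((Nat.factorial r.length : ℚ))⁻¹ * (r.blocks.map cL).prod from rfl, Finset.mul_sum]
  refine Finset.sum_congr rfl fun r _ => ?_
  have hl : (((j+1) :: r.blocks).length) = r.length + 1 := by
    simp [Composition.blocks_length]
  rw [hl, List.map_cons, List.prod_cons]
  show ((r.length + 1 : ℕ) : ℚ) * ((Nat.factorial (r.length + 1) : ℚ))⁻¹
      * (cL (j+1) * (r.blocks.map cL).prod) * ((j + 1 : ℕ) : ℚ)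
    = (-1) ^ j * (((Nat.factorial r.length : ℚ))⁻¹ * (r.blocks.map cL).prod)
  have hcL : cL (j+1) = (-1) ^ j * ((j : ℚ) + 1)⁻¹ := by
    show (-1) ^ (j + 1 - 1) * ((j + 1 : ℕ) : ℚ)⁻¹ = _
    push_cast
    norm_num
  have hz1 : ((r.length : ℚ) + 1) ≠ 0 := by positivity
  have hz2 : ((j : ℚ) + 1) ≠ 0 := by positivity
  have hz3 : ((Nat.factorial r.length : ℚ)) ≠ 0 := by
    exact_mod_cast (Nat.factorial_ne_zero r.length)
  rw [Nat.factorial_succ, hcL]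
  push_cast
  field_simp

theorem B_val (m : ℕ) : B m = if m ≤ 1 then 1 else 0 := by
  induction m using Nat.strong_induction_on with
  | _ m IH =>
    match m with
    | 0 => simpa using B_zero
    | 1 =>
      have h := B_rec 0
      rw [Finset.sum_range_one] at h
      norm_num [B_zero] at h
      simpa using h
    | (k+2) =>
      have h := B_rec (k + 1)
      have hterm : ∀ j ∈ Finset.range (k + 2), (-1 : ℚ) ^ j * B (k + 1 - j)
          = (if j = k then (-1 : ℚ) ^ j else 0) + (if j = k + 1 then (-1 : ℚ) ^ j else 0) := by
        intro j hj
        rw [Finset.mem_range] at hj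
        rw [IH (k + 1 - j) (by omega)]
        by_cases h1 : j = k + 1
        · have h3 : k + 1 - j = 0 := by omega
          have h4 : ¬(j = k) := by omega
          rw [h3]
          simp [h1, h4]
        · by_cases h2 : j = k
          · have h3 : k + 1 - j = 1 := by omega
            rw [h3]
            simp [h1, h2]
          · have hgt : ¬(k + 1 - j ≤ 1) := by omega
            simp [hgt, h1, h2]
      rw [show (k + 1 + 1) = k + 2 from rfl] at h
      rw [Finset.sum_congr rfl hterm, Finset.sum_add_distrib,
        Finset.sum_ite_eq' (Finset.range (k + 2)) k (fun j => (-1 : ℚ) ^ j),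
        Finset.sum_ite_eq' (Finset.range (k + 2)) (k + 1) (fun j => (-1 : ℚ) ^ j)] at h
      rw [if_pos (Finset.mem_range.2 (by omega)), if_pos (Finset.mem_range.2 (by omega))] at h
      have hzero : ((-1 : ℚ)) ^ k + (-1) ^ (k + 1) = 0 := by
        rw [pow_succ]; ring
      rw [hzero] at h
      have hk : ((k + 2 : ℕ) : ℚ) ≠ 0 := by positivity
      have : B (k + 2) = 0 := by
        have := mul_eq_zero.mp h
        tauto
      have hle : ¬(k + 2 ≤ 1) := by omega
      rw [this, if_neg hle]


/-! ### Assembly -/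

section Assembly

variable (K M : Type*) [CommRing K] [Algebra ℚ K] [CommMonoid M]

theorem hexp_eq : hoffmanExp K M = Ev K M (fun k => ((Nat.factorial k : ℚ))⁻¹) := by
  unfold hoffmanExp Ev
  congr 1
  funext w
  refine Finset.sum_congr rfl fun I _ => ?_
  have hc : ((∏ s : Fin I.length, (Nat.factorial (I.blocksFun s) : ℚ))⁻¹)
      = ((I.blocks.map (fun k => ((Nat.factorial k : ℚ))⁻¹)).prod) := by
    rw [blocks_map_prod, ← Finset.prod_inv_distrib]
  rw [hc]
  rfl

theorem hlog_eq : hoffmanLog K M = Ev K M cL := by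
  unfold hoffmanLog Ev
  congr 1
  funext w
  refine Finset.sum_congr rfl fun I _ => ?_
  have hc : ((-1 : ℚ) ^ (w.length - I.length) * (∏ s : Fin I.length, (I.blocksFun s : ℚ))⁻¹)
      = ((I.blocks.map cL).prod) := by
    rw [blocks_map_prod]
    show _ = ∏ s : Fin I.length, ((-1 : ℚ) ^ (I.blocksFun s - 1) * (I.blocksFun s : ℚ)⁻¹)
    rw [Finset.prod_mul_distrib, Finset.prod_pow_eq_pow_sum, ← Finset.prod_inv_distrib]
    have hsum : ∑ s : Fin I.length, (I.blocksFun s - 1) = w.length - I.length := by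
      have h1 : ∀ s : Fin I.length, 1 ≤ I.blocksFun s := I.one_le_blocksFun
      have h2 := I.sum_blocksFun
      have h3 : ∑ s : Fin I.length, (I.blocksFun s - 1)
          = (∑ s : Fin I.length, I.blocksFun s) - ∑ _s : Fin I.length, 1 :=
        Finset.sum_tsub_distrib _ (fun i _ => h1 i)
      rw [h3, h2]
      simp [Composition.length]
    rw [hsum]
  rw [hc]
  rfl

theorem hEL : (hoffmanExp K M) ∘ₗ (hoffmanLog K M) = LinearMap.id := by
  rw [hexp_eq, hlog_eq, Ev_comp]
  rw [Ev_congr (c' := fun m => if m = 1 then (1 : ℚ) else 0) ?_, Ev_delta]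
  intro m hm
  have hB := B_val m
  rw [show B m = ∑ d : Composition m,
      ((Nat.factorial d.length : ℚ))⁻¹ * (d.blocks.map cL).prod from rfl] at hB
  rw [hB]
  show _ = if m = 1 then (1 : ℚ) else 0
  rcases m with _ | m
  · omega
  · rcases m with _ | m
    · norm_num
    · have h1 : ¬(m + 1 + 1 ≤ 1) := by omega
      have h2 : ¬(m + 1 + 1 = 1) := by omega
      rw [if_neg h1, if_neg h2]

variable {K M}

theorem single_mem_range :
    ∀ (n : ℕ) (w : List M), w.length = n →
      Finsupp.single w (1 : K) ∈ LinearMap.range (Ev K M cL) := by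
  intro n
  induction n using Nat.strong_induction_on with
  | _ n IH =>
    intro w hw
    subst hw
    classical
    have happ := Ev_single (K := K) cL w
    have hones : (algebraMap ℚ K (((Composition.ones w.length).blocks.map cL).prod)) = 1 := by
      rw [Composition.ones_blocks, List.map_replicate, List.prod_replicate]
      norm_num [cL]
    rw [← Finset.add_sum_erase _ _ (Finset.mem_univ (Composition.ones w.length))] at happ
    rw [hones, one_smul, merge_ones] at happ
    have hsub : Finsupp.single w (1 : K) = Ev K M cL (Finsupp.single w 1)
        - ∑ I ∈ Finset.univ.erase (Composition.ones w.length),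
            (algebraMap ℚ K ((I.blocks.map cL).prod)) • Finsupp.single (merge w I) (1 : K) := by
      rw [happ]
      abel
    rw [hsub]
    apply Submodule.sub_mem
    · exact LinearMap.mem_range_self _ _
    · apply Submodule.sum_mem
      intro I hI
      apply Submodule.smul_mem
      have hne : I ≠ Composition.ones w.length := (Finset.mem_erase.1 hI).1
      have hlt : I.length < w.length := by
        have h1 : I.length ≤ w.length := I.length_le
        have h2 : I.length ≠ w.length := fun h =>
          hne (Composition.eq_ones_iff_length.2 h)
        omega
      have := IH I.length (by simpa [length_merge] using hlt) (merge w I) (length_merge w I)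
      exact this

theorem ev_cL_surj : Function.Surjective (Ev K M cL) := by
  intro x
  have hx : x ∈ LinearMap.range (Ev K M cL) := by
    induction x using Finsupp.induction_linear with
    | zero => exact Submodule.zero_mem _
    | add a b ha hb => exact Submodule.add_mem _ ha hb
    | single w k =>
      have h1 := single_mem_range (K := K) (M := M) w.length w rfl
      have h2 : Finsupp.single w k = k • Finsupp.single w (1 : K) := by
        rw [Finsupp.smul_single, smul_eq_mul, mul_one]
      rw [h2]
      exact Submodule.smul_mem _ _ h1
  exact hx

end Assembly

end HoffmanAux

/-- the Hoffman exponential `Φ = E_{e^t−1}` is a linear automorphism of the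
free `K`-module on words over a commutative monoid alphabet, with inverse
`Φ⁻¹ = E_{log(1+t)}` given by the explicit formula above. -/
theorem hoffmanExp_inverse (K M : Type*) [CommRing K] [Algebra ℚ K] [CommMonoid M] :
    Function.Bijective (hoffmanExp K M) ∧
    (hoffmanLog K M) ∘ₗ (hoffmanExp K M) = LinearMap.id ∧
    (hoffmanExp K M) ∘ₗ (hoffmanLog K M) = LinearMap.id := by
  have hEL := HoffmanAux.hEL K M
  have hELapp : ∀ x, hoffmanExp K M (hoffmanLog K M x) = x := fun x => by
    have := LinearMap.ext_iff.1 hEL x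
    simpa using this
  have hsurjL : Function.Surjective (hoffmanLog K M) := by
    rw [HoffmanAux.hlog_eq]
    exact HoffmanAux.ev_cL_surj
  have hLE : (hoffmanLog K M) ∘ₗ (hoffmanExp K M) = LinearMap.id := by
    apply LinearMap.ext
    intro x
    obtain ⟨y, rfl⟩ := hsurjL x
    simp [hELapp y]
  have hLEapp : ∀ x, hoffmanLog K M (hoffmanExp K M x) = x := fun x => by
    have := LinearMap.ext_iff.1 hLE x
    simpa using this
  refine ⟨⟨?_, ?_⟩, hLE, hEL⟩
  · intro a b hab
    have := congrArg (hoffmanLog K M) hab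
    rwa [hLEapp, hLEapp] at this
  · intro x
    exact ⟨hoffmanLog K M x, hELapp x⟩
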